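/- One step of gradient descent on the BCE recommendation loss can be rewritten as a linear map applied to the current representations: if R_{t+1} = R_t − α · ∇_R L(R_t) for learning rate α ∈ ℝ, then R_{t+1} = (I + α · A^grad(R_t)) · R_t, where I is the (n+m)×(n+m) identity matrix. -/

import Mathlib

open Matrix Finset

noncomputable section

/-- The sigmoid function `σ(x) = 1 / (1 + e^{-x})`. -/
def sigmoid (x : ℝ) : ℝ := 1 / (1 + Real.exp (-x))

/-- The softplus function `softplus(x) = log(1 + e^x)`. -/
def softplus (x : ℝ) : ℝ := Real.log (1 + Real.exp x)

/-- Dot product between the user row `u` (among the first `n` rows, encoded as `Sum.inl`)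
and the item row `i` (among the last `m` rows, encoded as `Sum.inr`) of the
representation matrix `R`. -/
def rowDot {n m d : ℕ} (R : Matrix (Fin n ⊕ Fin m) (Fin d) ℝ)
    (u : Fin n) (i : Fin m) : ℝ :=
  ∑ j, R (Sum.inl u) j * R (Sum.inr i) j

/-- The BCE recommendation loss
`L(R) = Σ_{(u,i)∈Ω} softplus(−⟨r_u, r_i⟩) + β · Σ_{(u,i)∉Ω} softplus(⟨r_u, r_i⟩)`. -/
def bceLoss {n m d : ℕ} (Ω : Finset (Fin n × Fin m)) (β : ℝ)
    (R : Matrix (Fin n ⊕ Fin m) (Fin d) ℝ) : ℝ :=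
  (∑ p ∈ Ω, softplus (-(rowDot R p.1 p.2)))
    + β * ∑ p ∈ Ωᶜ, softplus (rowDot R p.1 p.2)

/-- The partial derivative of `f` at `R` with respect to the `(k, j)` entry,
all other entries held fixed. -/
def pderivEntry {n m d : ℕ} (f : Matrix (Fin n ⊕ Fin m) (Fin d) ℝ → ℝ)
    (R : Matrix (Fin n ⊕ Fin m) (Fin d) ℝ) (k : Fin n ⊕ Fin m) (j : Fin d) : ℝ :=
  deriv (fun t : ℝ => f (R + t • Matrix.single k j (1 : ℝ))) 0

/-- The matrix `P^grad(R) ∈ ℝ^{n×m}` with entries `σ(−⟨r_u, r_i⟩)` for `(u,i) ∈ Ω`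
and `−β·σ(⟨r_u, r_i⟩)` otherwise. -/
def Pgrad {n m d : ℕ} (Ω : Finset (Fin n × Fin m)) (β : ℝ)
    (R : Matrix (Fin n ⊕ Fin m) (Fin d) ℝ) : Matrix (Fin n) (Fin m) ℝ :=
  Matrix.of fun u i =>
    if (u, i) ∈ Ω then sigmoid (-(rowDot R u i)) else -β * sigmoid (rowDot R u i)

/-- The block anti-diagonal matrix `A^grad(R) = [[0, P^grad(R)], [(P^grad(R))ᵀ, 0]]`. -/
def Agrad {n m d : ℕ} (Ω : Finset (Fin n × Fin m)) (β : ℝ)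
    (R : Matrix (Fin n ⊕ Fin m) (Fin d) ℝ) :
    Matrix (Fin n ⊕ Fin m) (Fin n ⊕ Fin m) ℝ :=
  Matrix.fromBlocks 0 (Pgrad Ω β R) (Pgrad Ω β R)ᵀ 0

/-- The gradient `∇_R L(R) ∈ ℝ^{(n+m)×d}`: the matrix whose `(k, j)` entry is the
partial derivative of the BCE loss with respect to `R_{k,j}`. -/
def gradLoss {n m d : ℕ} (Ω : Finset (Fin n × Fin m)) (β : ℝ)
    (R : Matrix (Fin n ⊕ Fin m) (Fin d) ℝ) : Matrix (Fin n ⊕ Fin m) (Fin d) ℝ :=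
  Matrix.of fun k j => pderivEntry (bceLoss Ω β) R k j

lemma hasDerivAt_softplus (x : ℝ) : HasDerivAt softplus (sigmoid x) x := by
  have h1 : (0:ℝ) < 1 + Real.exp x := by positivity
  have := ((Real.hasDerivAt_exp x).const_add 1).log h1.ne'
  convert this using 1
  · rfl
  · unfold sigmoid; rw [Real.exp_neg]; field_simp; ring

def cf {n m d : ℕ} (R : Matrix (Fin n ⊕ Fin m) (Fin d) ℝ)
    (k : Fin n ⊕ Fin m) (j : Fin d) (u : Fin n) (i : Fin m) : ℝ :=
  (if k = Sum.inl u then R (Sum.inr i) j else 0)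
    + (if k = Sum.inr i then R (Sum.inl u) j else 0)

lemma rowDot_perturb {n m d : ℕ} (R : Matrix (Fin n ⊕ Fin m) (Fin d) ℝ)
    (k : Fin n ⊕ Fin m) (j : Fin d) (t : ℝ) (u : Fin n) (i : Fin m) :
    rowDot (R + t • Matrix.single k j (1 : ℝ)) u i
      = rowDot R u i + t * cf R k j u i := by
  unfold rowDot cf
  rcases k with u₀ | i₀
  · by_cases hu : u₀ = u
    · subst hu
      simp [Matrix.add_apply, Matrix.smul_apply, Matrix.single, add_mul,
        Finset.sum_add_distrib, Finset.mul_sum, ite_mul, Finset.sum_ite_eq]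
    · simp [Matrix.add_apply, Matrix.smul_apply, Matrix.single, hu,
        fun j' => show ¬(u₀ = u ∧ j = j') from fun h => hu h.1]
  · by_cases hi : i₀ = i
    · subst hi
      simp [Matrix.add_apply, Matrix.smul_apply, Matrix.single, mul_add,
        Finset.sum_add_distrib, Finset.mul_sum, mul_ite, Finset.sum_ite_eq, mul_comm, mul_left_comm]
    · simp [Matrix.add_apply, Matrix.smul_apply, Matrix.single, hi,
        fun j' => show ¬(i₀ = i ∧ j = j') from fun h => hi h.1]

lemma pderivEntry_bceLoss {n m d : ℕ} (Ω : Finset (Fin n × Fin m)) (β : ℝ)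
    (R : Matrix (Fin n ⊕ Fin m) (Fin d) ℝ) (k : Fin n ⊕ Fin m) (j : Fin d) :
    pderivEntry (bceLoss Ω β) R k j
      = (∑ p ∈ Ω, -(sigmoid (-(rowDot R p.1 p.2)) * cf R k j p.1 p.2))
        + β * ∑ p ∈ Ωᶜ, sigmoid (rowDot R p.1 p.2) * cf R k j p.1 p.2 := by
  unfold pderivEntry
  have key : HasDerivAt (fun t : ℝ => bceLoss Ω β (R + t • Matrix.single k j (1:ℝ)))
      ((∑ p ∈ Ω, -(sigmoid (-(rowDot R p.1 p.2)) * cf R k j p.1 p.2))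
        + β * ∑ p ∈ Ωᶜ, sigmoid (rowDot R p.1 p.2) * cf R k j p.1 p.2) 0 := by
    have h1 : ∀ p : Fin n × Fin m, HasDerivAt
        (fun t : ℝ => softplus (-(rowDot (R + t • Matrix.single k j (1:ℝ)) p.1 p.2)))
        (-(sigmoid (-(rowDot R p.1 p.2)) * cf R k j p.1 p.2)) 0 := by
      intro p
      have hin : HasDerivAt (fun t : ℝ => -(rowDot R p.1 p.2 + t * cf R k j p.1 p.2))
          (-(cf R k j p.1 p.2)) 0 :=
        (((hasDerivAt_mul_const (cf R k j p.1 p.2)).const_add _).neg)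
      have hout := hasDerivAt_softplus (-(rowDot R p.1 p.2 + 0 * cf R k j p.1 p.2))
      have hc := hout.comp 0 hin
      simp only [zero_mul, add_zero] at hc
      have heq : (fun t : ℝ => softplus (-(rowDot (R + t • Matrix.single k j (1:ℝ)) p.1 p.2)))
          = softplus ∘ (fun t : ℝ => -(rowDot R p.1 p.2 + t * cf R k j p.1 p.2)) := by
        funext t; simp only [Function.comp_apply]; rw [rowDot_perturb]
      rw [heq, show -(sigmoid (-(rowDot R p.1 p.2)) * cf R k j p.1 p.2)
          = sigmoid (-(rowDot R p.1 p.2)) * -(cf R k j p.1 p.2) by ring]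
      exact hc
    have h2 : ∀ p : Fin n × Fin m, HasDerivAt
        (fun t : ℝ => softplus (rowDot (R + t • Matrix.single k j (1:ℝ)) p.1 p.2))
        (sigmoid (rowDot R p.1 p.2) * cf R k j p.1 p.2) 0 := by
      intro p
      have hin : HasDerivAt (fun t : ℝ => rowDot R p.1 p.2 + t * cf R k j p.1 p.2)
          (cf R k j p.1 p.2) 0 :=
        ((hasDerivAt_mul_const (cf R k j p.1 p.2)).const_add _)
      have hout := hasDerivAt_softplus (rowDot R p.1 p.2 + 0 * cf R k j p.1 p.2)
      have hc := hout.comp 0 hin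
      simp only [zero_mul, add_zero] at hc
      have heq : (fun t : ℝ => softplus (rowDot (R + t • Matrix.single k j (1:ℝ)) p.1 p.2))
          = softplus ∘ (fun t : ℝ => rowDot R p.1 p.2 + t * cf R k j p.1 p.2) := by
        funext t; simp only [Function.comp_apply]; rw [rowDot_perturb]
      rw [heq]
      exact hc
    have hA : HasDerivAt (fun t : ℝ => ∑ p ∈ Ω,
        softplus (-(rowDot (R + t • Matrix.single k j (1:ℝ)) p.1 p.2)))
        (∑ p ∈ Ω, -(sigmoid (-(rowDot R p.1 p.2)) * cf R k j p.1 p.2)) 0 :=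
      HasDerivAt.fun_sum fun p _ => h1 p
    have hB : HasDerivAt (fun t : ℝ => ∑ p ∈ Ωᶜ,
        softplus (rowDot (R + t • Matrix.single k j (1:ℝ)) p.1 p.2))
        (∑ p ∈ Ωᶜ, sigmoid (rowDot R p.1 p.2) * cf R k j p.1 p.2) 0 :=
      HasDerivAt.fun_sum fun p _ => h2 p
    exact hA.add (hB.const_mul β)
  exact key.deriv

lemma gradLoss_eq_neg {n m d : ℕ} (Ω : Finset (Fin n × Fin m)) (β : ℝ)
    (R : Matrix (Fin n ⊕ Fin m) (Fin d) ℝ) :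
    gradLoss Ω β R = -(Agrad Ω β R * R) := by
  ext k j
  show pderivEntry (bceLoss Ω β) R k j = -((Agrad Ω β R * R) k j)
  rw [pderivEntry_bceLoss]
  have hA : (Agrad Ω β R * R) k j
      = ∑ p : Fin n × Fin m, Pgrad Ω β R p.1 p.2 * cf R k j p.1 p.2 := by
    rcases k with u | i
    · simp [Matrix.mul_apply, Agrad, Fintype.sum_sum_type, Fintype.sum_prod_type, cf,
        mul_ite, mul_zero, Finset.sum_ite_eq, eq_comm]
    · simp [Matrix.mul_apply, Agrad, Fintype.sum_sum_type, Fintype.sum_prod_type, cf,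
        mul_ite, mul_zero, Finset.sum_ite_eq, eq_comm, Finset.sum_comm (γ := Fin m)]
  rw [hA, ← Finset.sum_add_sum_compl Ω
    (fun p => Pgrad Ω β R p.1 p.2 * cf R k j p.1 p.2)]
  have h1 : ∑ p ∈ Ω, Pgrad Ω β R p.1 p.2 * cf R k j p.1 p.2
      = ∑ p ∈ Ω, sigmoid (-(rowDot R p.1 p.2)) * cf R k j p.1 p.2 :=
    Finset.sum_congr rfl fun p hp => by simp [Pgrad, hp]
  have h2 : ∑ p ∈ Ωᶜ, Pgrad Ω β R p.1 p.2 * cf R k j p.1 p.2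
      = ∑ p ∈ Ωᶜ, (-β * sigmoid (rowDot R p.1 p.2)) * cf R k j p.1 p.2 :=
    Finset.sum_congr rfl fun p hp => by
      simp [Pgrad, show (p.1, p.2) ∉ Ω by simpa using Finset.mem_compl.mp hp]
  rw [h1, h2, neg_add, ← Finset.sum_neg_distrib, Finset.mul_sum, ← Finset.sum_neg_distrib]
  congr 1
  exact Finset.sum_congr rfl fun p _ => by ring

/-- One step of gradient descent on the BCE loss is a linear map applied to the
current representations: if `R_{t+1} = R_t − α · ∇_R L(R_t)`, then
`R_{t+1} = (I + α · A^grad(R_t)) · R_t`. -/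
theorem sgd_step_eq_linear_map {n m d : ℕ} (hn : 0 < n) (hm : 0 < m) (hd : 0 < d)
    (Ω : Finset (Fin n × Fin m)) (β : ℝ) (α : ℝ)
    (Rt Rt1 : Matrix (Fin n ⊕ Fin m) (Fin d) ℝ)
    (h : Rt1 = Rt - α • gradLoss Ω β Rt) :
    Rt1 = (1 + α • Agrad Ω β Rt) * Rt := by
  subst h
  rw [gradLoss_eq_neg, Matrix.add_mul, Matrix.one_mul, Matrix.smul_mul, smul_neg, sub_neg_eq_add]
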